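/- Let n be an even integer and ℓ an integer with n/2 < ℓ < n. Every zero-free sequence of length ℓ in Z/nZ contains a generator of Z/nZ with multiplicity at least 2ℓ − n + 1, and this bound is attained (e.g., by the image in Z/nZ of the integer sequence with 2ℓ−n+1 ones and n−ℓ−1 twos). -/

import Mathlib

namespace ZFAux

variable {G : Type*} [AddCommGroup G] [DecidableEq G]

/-- zero-free multiset -/
def ZF (S : Multiset G) : Prop := ∀ t ≤ S, t ≠ 0 → t.sum ≠ 0

/-- finset of all submultiset sums (including 0 = empty sum) -/
def AF (S : Multiset G) : Finset G := (S.powerset.map Multiset.sum).toFinset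

lemma mem_AF {S : Multiset G} {x : G} : x ∈ AF S ↔ ∃ t, t ≤ S ∧ t.sum = x := by
  simp [AF, Multiset.mem_powerset, eq_comm]

lemma zero_mem_AF (S : Multiset G) : (0 : G) ∈ AF S :=
  mem_AF.2 ⟨0, Multiset.zero_le S, rfl⟩

lemma sum_mem_AF (S : Multiset G) : S.sum ∈ AF S := mem_AF.2 ⟨S, le_refl S, rfl⟩

lemma mem_AF_of_mem {S : Multiset G} {b : G} (hb : b ∈ S) : b ∈ AF S :=
  mem_AF.2 ⟨{b}, Multiset.singleton_le.2 hb, by simp⟩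

lemma AF_cons (a : G) (S : Multiset G) :
    AF (a ::ₘ S) = AF S ∪ (AF S).image (a + ·) := by
  ext x
  simp only [AF, Multiset.powerset_cons, Multiset.toFinset_add, Multiset.map_add,
    Multiset.map_map, Finset.mem_union, Multiset.mem_toFinset, Multiset.mem_map,
    Finset.mem_image]
  constructor
  · rintro (⟨t, ht, rfl⟩ | ⟨t, ht, rfl⟩)
    · exact Or.inl ⟨t, ht, rfl⟩
    · exact Or.inr ⟨t.sum, ⟨t, ht, rfl⟩, by simp⟩
  · rintro (⟨t, ht, rfl⟩ | ⟨y, ⟨t, ht, rfl⟩, rfl⟩)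
    · exact Or.inl ⟨t, ht, rfl⟩
    · exact Or.inr ⟨t, ht, by simp⟩

lemma AF_le {S T : Multiset G} (h : S ≤ T) : AF S ⊆ AF T := by
  intro x hx
  rcases mem_AF.1 hx with ⟨t, ht, rfl⟩
  exact mem_AF.2 ⟨t, ht.trans h, rfl⟩

lemma ZF_of_le {S T : Multiset G} (h : S ≤ T) (hT : ZF T) : ZF S :=
  fun t ht => hT t (ht.trans h)

section zf
variable {S : Multiset G} (hzf : ZF S)

lemma term_ne_zero {b : G} (hb : b ∈ S) (hzf : ZF S) : b ≠ 0 := by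
  intro h
  exact hzf {b} (Multiset.singleton_le.2 hb) (by simp) (by simp [h])

lemma neg_not_mem_AF_erase {b : G} (hb : b ∈ S) (hzf : ZF S) : -b ∉ AF (S.erase b) := by
  intro h
  rcases mem_AF.1 h with ⟨t, ht, hsum⟩
  have hle : b ::ₘ t ≤ S := by
    rw [← Multiset.cons_erase hb]
    exact Multiset.cons_le_cons b ht
  exact hzf (b ::ₘ t) hle (by simp) (by simp [hsum])

lemma sum_not_mem_AF_erase {b : G} (hb : b ∈ S) (hzf : ZF S) : S.sum ∉ AF (S.erase b) := by
  intro h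
  rcases mem_AF.1 h with ⟨t, ht, hsum⟩
  have htS : t ≤ S := ht.trans (Multiset.erase_le b S)
  rcases Multiset.le_iff_exists_add.1 htS with ⟨u, hu⟩
  have htcard : t.card ≤ (S.erase b).card := Multiset.card_le_card ht
  have hbcard : (S.erase b).card < S.card := by
    rw [Multiset.card_erase_of_mem hb]
    have hpos : 0 < S.card := Multiset.card_pos.2 (fun h0 => by simp [h0] at hb)
    exact Nat.pred_lt (by omega)
  have hune : u ≠ 0 := by
    intro h0
    have hcc : S.card = t.card := by rw [hu, h0, add_zero]
    omega
  apply hzf u (by rw [hu]; exact Multiset.le_add_left u t) hune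
  have h2 : S.sum = t.sum + u.sum := by rw [hu, Multiset.sum_add]
  rw [hsum] at h2
  exact (left_eq_add.1 h2)
  
end zf


lemma AF_card_lt {S : Multiset G} {b : G} (hb : b ∈ S) (hzf : ZF S) :
    (AF (S.erase b)).card < (AF S).card := by
  set A' := AF (S.erase b) with hA'
  have hsub : A' ⊆ AF S := AF_le (Multiset.erase_le b S)
  by_contra hle
  push_neg at hle
  have heq : AF S = A' := (Finset.eq_of_subset_of_card_le hsub hle).symm
  have himg : A'.image (b + ·) ⊆ A' := by
    intro x hx
    rcases Finset.mem_image.1 hx with ⟨y, hy, rfl⟩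
    have h2 : b + y ∈ AF (b ::ₘ S.erase b) := by
      rw [AF_cons]
      exact Finset.mem_union_right _ (Finset.mem_image_of_mem _ hy)
    rw [Multiset.cons_erase hb, heq] at h2
    exact h2
  have heq2 : A'.image (b + ·) = A' := by
    apply Finset.eq_of_subset_of_card_le himg
    rw [Finset.card_image_of_injective _ (add_right_injective b)]
  have h0 : (0 : G) ∈ A'.image (b + ·) := heq2.symm ▸ zero_mem_AF _
  rcases Finset.mem_image.1 h0 with ⟨y, hy, hy0⟩
  have : y = -b := by linear_combination (norm := abel_nf) hy0
  rw [this] at hy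
  exact neg_not_mem_AF_erase hb hzf hy

section fin
variable [Fintype G]

lemma smul_mod (b : G) (k : ℕ) : (k % addOrderOf b) • b = k • b := by
  conv_rhs => rw [← Nat.mod_add_div k (addOrderOf b), add_smul, mul_comm, mul_smul,
    addOrderOf_nsmul_eq_zero b, smul_zero, add_zero]

lemma smul_inj {b : G} {i j : ℕ} (hi : i < addOrderOf b) (hj : j < addOrderOf b)
    (hb : i • b = j • b) : i = j := by
  have h : ((i : ℤ) - j) • b = 0 := by rw [sub_smul]; push_cast [natCast_zsmul]; simp [hb]
  have hd := addOrderOf_dvd_iff_zsmul_eq_zero.2 h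
  have h0 : (i : ℤ) - j = 0 := Int.eq_zero_of_abs_lt_dvd hd (by rw [abs_sub_lt_iff]; omega)
  omega

/-- interval-smooth -/
def SmI (S : Multiset G) : Prop :=
  ∃ (g : G) (cf : Multiset ℕ), g ≠ 0 ∧ S = cf.map (fun j => j • g) ∧ (∀ x ∈ cf, 1 ≤ x) ∧
    cf.sum + 1 ≤ addOrderOf g ∧ AF S = (Finset.range (cf.sum + 1)).image (fun j => j • g)

lemma AF_replicate (b : G) (m : ℕ) :
    AF (Multiset.replicate m b) = (Finset.range (m + 1)).image (fun j => j • b) := by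
  induction m with
  | zero => ext x; simp [AF, Multiset.powerset_zero]
  | succ m ih =>
    rw [Multiset.replicate_succ, AF_cons, ih]
    ext x
    simp only [Finset.mem_union, Finset.mem_image, Finset.mem_range]
    constructor
    · rintro (⟨j, hj, rfl⟩ | ⟨y, ⟨j, hj, rfl⟩, rfl⟩)
      · exact ⟨j, by omega, rfl⟩
      · exact ⟨j + 1, by omega, by rw [add_comm j 1, add_smul, one_smul]⟩
    · rintro ⟨j, hj, rfl⟩
      rcases Nat.lt_or_ge j (m + 1) with h | h
      · exact Or.inl ⟨j, h, rfl⟩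
      · refine Or.inr ⟨(j - 1) • b, ⟨j - 1, by omega, rfl⟩, ?_⟩
        conv_rhs => rw [show j = 1 + (j - 1) by omega]
        rw [add_smul, one_smul]

lemma single_value_SmI {S : Multiset G} (hzf : ZF S) (hS : S ≠ 0)
    (hsv : ∀ u ∈ S, ∀ v ∈ S, u = v) : SmI S := by
  obtain ⟨b, hb⟩ := Multiset.exists_mem_of_ne_zero hS
  have hrep : S = Multiset.replicate S.card b :=
    Multiset.eq_replicate_card.2 (fun x hx => hsv x hx b hb)
  have hbne : b ≠ 0 := term_ne_zero hb hzf
  have hord : S.card + 1 ≤ addOrderOf b := by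
    by_contra hlt
    push_neg at hlt
    have h1 : 0 < addOrderOf b := addOrderOf_pos b
    have hle : Multiset.replicate (addOrderOf b) b ≤ S := by
      rw [hrep]
      exact (Multiset.replicate_le_replicate b).2 (by omega)
    have hne : Multiset.replicate (addOrderOf b) b ≠ 0 := by
      intro hc
      have := congrArg Multiset.card hc
      simp only [Multiset.card_replicate, Multiset.card_zero] at this
      omega
    apply hzf _ hle hne
    simp [Multiset.sum_replicate, addOrderOf_nsmul_eq_zero]
  refine ⟨b, Multiset.replicate S.card 1, hbne, ?_, ?_, ?_, ?_⟩
  · rw [Multiset.map_replicate]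
    simpa using hrep
  · intro x hx; rw [Multiset.eq_of_mem_replicate hx]
  · simpa [Multiset.sum_replicate] using hord
  · rw [Multiset.sum_replicate, smul_eq_mul, mul_one]
    conv_lhs => rw [hrep]
    exact AF_replicate b S.card

end fin

lemma sum_ge_card {cf : Multiset ℕ} (h1 : ∀ x ∈ cf, 1 ≤ x) : cf.card ≤ cf.sum := by
  induction cf using Multiset.induction_on with
  | empty => simp
  | cons a s ih =>
    simp only [Multiset.card_cons, Multiset.sum_cons]
    have ha := h1 a (Multiset.mem_cons_self a s)
    have := ih (fun x hx => h1 x (Multiset.mem_cons_of_mem hx))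
    omega

section lift
variable [Fintype G]

lemma lift_lemma {S : Multiset G} {b : G} (hzf : ZF S) (hb : b ∈ S) (hsm : SmI (S.erase b)) :
    2 * S.card ≤ (AF S).card ∨ SmI S := by
  obtain ⟨g, cf, hg, hmap, hcf1, hord, hAF'⟩ := hsm
  set T := cf.sum with hT
  set d := addOrderOf g with hd
  set A' := AF (S.erase b) with hA'
  have hdpos : 0 < d := addOrderOf_pos g
  have hcard' : (S.erase b).card = cf.card := by rw [hmap, Multiset.card_map]
  have hScard : (S.erase b).card + 1 = S.card := by
    rw [Multiset.card_erase_of_mem hb]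
    have hp : 0 < S.card := Multiset.card_pos.2 (fun h0 => by simp [h0] at hb)
    exact Nat.succ_pred_eq_of_pos hp
  have hTge : S.card ≤ T + 1 := by
    have := sum_ge_card hcf1
    omega
  have hAFS : AF S = A' ∪ A'.image (b + ·) := by
    conv_lhs => rw [← Multiset.cons_erase hb]
    exact AF_cons b (S.erase b)
  have hinj : ∀ i j : ℕ, i < d → j < d → i • g = j • g → i = j := fun i j hi hj =>
    smul_inj hi hj
  have hcardA' : A'.card = T + 1 := by
    rw [hAF', Finset.card_image_of_injOn, Finset.card_range]
    intro i hi j hj hij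
    simp only [Finset.mem_coe, Finset.mem_range] at hi hj
    exact hinj i j (by omega) (by omega) hij
  by_cases hbg : ∃ u : ℕ, u • g = b
  · -- b in the cyclic part
    have hbg' : ∃ u : ℕ, u • g = b ∧ u < d := by
      obtain ⟨u, hu⟩ := hbg
      exact ⟨u % d, by rw [smul_mod]; exact hu, Nat.mod_lt _ hdpos⟩
    obtain ⟨u, hu, hud⟩ := hbg'
    have hu1 : 1 ≤ u := by
      rcases Nat.eq_zero_or_pos u with h0 | h1
      · exfalso; apply term_ne_zero hb hzf; rw [← hu, h0, zero_smul]
      · exact h1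
    -- key bound  u + T + 1 ≤ d
    have hkey : u + T + 1 ≤ d := by
      by_contra hlt
      push_neg at hlt
      have hj : d - u ≤ T ∧ 1 ≤ d - u := by omega
      have hjg : (d - u) • g ∈ A' := by
        rw [hAF']
        exact Finset.mem_image_of_mem _ (Finset.mem_range.2 (by omega))
      rcases mem_AF.1 hjg with ⟨t, ht, hts⟩
      have hle : b ::ₘ t ≤ S := by
        rw [← Multiset.cons_erase hb]
        exact Multiset.cons_le_cons b ht
      apply hzf _ hle (by simp)
      rw [Multiset.sum_cons, hts, ← hu, ← add_smul]
      have : u + (d - u) = d := by omega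
      rw [this, hd, addOrderOf_nsmul_eq_zero]
    rcases Nat.lt_or_ge (T + 1) u with hcase | hcase
    · -- u ≥ T + 2 : disjoint, big card
      left
      have hdisj : Disjoint A' (A'.image (b + ·)) := by
        rw [Finset.disjoint_left]
        intro x hx hx2
        rw [hAF'] at hx
        rcases Finset.mem_image.1 hx with ⟨i, hi, rfl⟩
        rcases Finset.mem_image.1 hx2 with ⟨y, hy, hxy⟩
        rw [hAF'] at hy
        rcases Finset.mem_image.1 hy with ⟨j, hj, rfl⟩
        rw [Finset.mem_range] at hi hj
        rw [← hu, ← add_smul] at hxy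
        have := hinj (u + j) i (by omega) (by omega) hxy
        omega
      rw [hAFS, Finset.card_union_of_disjoint hdisj,
        Finset.card_image_of_injective _ (add_right_injective b), hcardA']
      omega
    · -- u ≤ T + 1 : smooth
      right
      refine ⟨g, u ::ₘ cf, hg, ?_, ?_, ?_, ?_⟩
      · conv_lhs => rw [← Multiset.cons_erase hb]
        rw [Multiset.map_cons, hu, hmap]
      · intro x hx
        rcases Multiset.mem_cons.1 hx with rfl | hx
        · exact hu1
        · exact hcf1 x hx
      · rw [Multiset.sum_cons]; omega
      · rw [hAFS, hAF']
        ext x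
        simp only [Finset.mem_union, Finset.mem_image, Finset.mem_range,
          Multiset.sum_cons]
        constructor
        · rintro (⟨j, hj, rfl⟩ | ⟨y, ⟨j, hj, rfl⟩, rfl⟩)
          · exact ⟨j, by omega, rfl⟩
          · exact ⟨u + j, by omega, by rw [← hu, ← add_smul]⟩
        · rintro ⟨j, hj, rfl⟩
          rcases Nat.lt_or_ge j (T + 1) with h | h
          · exact Or.inl ⟨j, h, rfl⟩
          · refine Or.inr ⟨(j - u) • g, ⟨j - u, by omega, rfl⟩, ?_⟩
            rw [← hu, ← add_smul]
            congr 1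
            omega
  · -- b not a multiple of g : huge sumset
    left
    have hdisj : Disjoint A' (A'.image (b + ·)) := by
      rw [Finset.disjoint_left]
      intro x hx hx2
      rw [hAF'] at hx
      rcases Finset.mem_image.1 hx with ⟨i, hi, rfl⟩
      rcases Finset.mem_image.1 hx2 with ⟨y, hy, hxy⟩
      rw [hAF'] at hy
      rcases Finset.mem_image.1 hy with ⟨j, hj, rfl⟩
      rw [Finset.mem_range] at hi hj
      apply hbg
      refine ⟨i + (d - j), ?_⟩
      rw [add_smul, ← hxy]
      have hjg : (d - j) • g = - (j • g) := by
        rw [eq_neg_iff_add_eq_zero, ← add_smul]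
        have : d - j + j = d := by omega
        rw [this, hd, addOrderOf_nsmul_eq_zero]
      rw [hjg]
      abel
    rw [hAFS, Finset.card_union_of_disjoint hdisj,
      Finset.card_image_of_injective _ (add_right_injective b), hcardA']
    omega

end lift

section rigid
variable [Fintype G]

lemma smul_neg_nat (b : G) (j : ℕ) :
    (addOrderOf b - j % addOrderOf b) • b = -(j • b) := by
  have hd : 0 < addOrderOf b := addOrderOf_pos b
  rw [eq_neg_iff_add_eq_zero, ← smul_mod b j, ← add_smul]
  have : addOrderOf b - j % addOrderOf b + j % addOrderOf b = addOrderOf b := by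
    have := Nat.mod_lt j hd
    omega
  rw [this, addOrderOf_nsmul_eq_zero]

lemma rigid_absurd {S : Multiset G} (hzf : ZF S)
    (Hmem : ∀ v ∈ S, ∀ x ∈ AF S, x ≠ S.sum → x ∈ AF (S.erase v))
    {b0 c0 : G} (hb0 : b0 ∈ S) (hc0 : c0 ∈ S) (hne0 : b0 ≠ c0) : False := by
  classical
  set σ := S.sum with hσdef
  set A := AF S with hA
  -- door lemma
  have door : ∀ v ∈ S, ∀ x ∈ A, x ≠ σ → x + v ∈ A := by
    intro v hv x hx hxσ
    have hx' : x ∈ AF (S.erase v) := Hmem v hv x hx hxσ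
    have : x + v ∈ AF (v ::ₘ S.erase v) := by
      rw [AF_cons]
      refine Finset.mem_union_right _ ?_
      rw [show x + v = v + x by abel]
      exact Finset.mem_image_of_mem _ hx'
    rwa [Multiset.cons_erase hv] at this
  have neg_mem_imp : ∀ v ∈ S, -v ∈ A → -v = σ := by
    intro v hv hmem
    by_contra hne
    exact neg_not_mem_AF_erase hv hzf (Hmem v hv _ hmem hne)
  have hσ0 : σ ≠ 0 := hzf S le_rfl (fun h0 => by simp [h0] at hb0)
  -- walk lemma
  have walk : ∀ x ∈ A, ∀ v ∈ S, (∃ k : ℕ, x + k • v = σ) ∨ (∀ k : ℕ, x + k • v ∈ A) := by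
    intro x hx v hv
    by_cases hex : ∃ k : ℕ, x + k • v = σ
    · exact Or.inl hex
    · refine Or.inr ?_
      intro k
      induction k with
      | zero => simpa using hx
      | succ k ih =>
        have hne : x + k • v ≠ σ := fun h => hex ⟨k, h⟩
        have := door v hv _ ih hne
        rwa [add_assoc, ← succ_nsmul] at this
  -- choose labels so that σ ≠ -b
  obtain ⟨b, c, hbS, hcS, hbc, hσb⟩ :
      ∃ b c : G, b ∈ S ∧ c ∈ S ∧ b ≠ c ∧ σ ≠ -b := by
    by_cases h : σ = -b0
    · refine ⟨c0, b0, hc0, hb0, hne0.symm, ?_⟩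
      intro h2
      apply hne0
      have : -b0 = -c0 := by rw [← h, h2]
      simpa using this
    · exact ⟨b0, c0, hb0, hc0, hne0, h⟩
  set d := addOrderOf b with hd
  have hdpos : 0 < d := addOrderOf_pos b
  have hnegb : -b ∉ A := fun h => hσb ((neg_mem_imp b hbS h).symm)
  have hd2 : 2 ≤ d := by
    rcases Nat.eq_or_lt_of_le hdpos with h1 | h1
    · exfalso
      apply term_ne_zero hbS hzf
      have h0 : addOrderOf b • b = 0 := addOrderOf_nsmul_eq_zero b
      rw [← hd, ← h1] at h0
      simpa using h0
    · omega
  have hdb : (d - 1) • b = -b := by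
    have h := smul_neg_nat b 1
    rw [← hd, Nat.mod_eq_of_lt (by omega)] at h
    simpa using h
  -- σ is a multiple of b
  have hσmult : ∃ k : ℕ, k • b = σ := by
    rcases walk 0 (zero_mem_AF S) b hbS with ⟨k, hk⟩ | hall
    · exact ⟨k, by simpa using hk⟩
    · exfalso
      apply hnegb
      have := hall (d - 1)
      rwa [zero_add, hdb] at this
  set σh := Nat.find hσmult with hσh
  have hσhspec : σh • b = σ := Nat.find_spec hσmult
  have hσhlt : σh < d := by
    obtain ⟨k, hk⟩ := hσmult
    have hle : σh ≤ k % d := Nat.find_le (by rw [smul_mod]; exact hk)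
    have := Nat.mod_lt k hdpos
    omega
  have hσhpos : 1 ≤ σh := by
    rcases Nat.eq_zero_or_pos σh with h0 | h1
    · exfalso; apply hσ0; rw [← hσhspec, h0, zero_smul]
    · exact h1
  have hσhne : σh ≠ d - 1 := by
    intro h
    apply hσb
    rw [← hσhspec, h, hdb]
  -- walk prefix
  have walk_prefix : ∀ i, i ≤ σh → i • b ∈ A := by
    intro i
    induction i with
    | zero => intro _; simpa using zero_mem_AF S
    | succ i ih =>
      intro hi
      have hii : i ≤ σh := by omega
      have hmem := ih hii
      have hne : i • b ≠ σ := by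
        intro h
        have : σh ≤ i := Nat.find_le h
        omega
      have := door b hbS _ hmem hne
      rwa [← succ_nsmul] at this
  -- B exactness
  have Bexact : ∀ j, j < d → j • b ∈ A → j ≤ σh := by
    intro j hjd hjA
    by_contra hgt
    push_neg at hgt
    have haux : ∀ i, i ≤ d - 1 - j → (j + i) • b ∈ A := by
      intro i
      induction i with
      | zero => intro _; simpa using hjA
      | succ i ih =>
        intro hi
        have hmem := ih (by omega)
        have hne : (j + i) • b ≠ σ := by
          intro h
          rw [← hσhspec] at h
          have := smul_inj (i := j + i) (j := σh) (by omega) (by omega) h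
          omega
        have := door b hbS _ hmem hne
        rw [← succ_nsmul] at this
        have heq : j + i + 1 = j + (i + 1) := by omega
        rwa [heq] at this
    have := haux (d - 1 - j) le_rfl
    rw [show j + (d - 1 - j) = d - 1 by omega, hdb] at this
    exact hnegb this
  -- c is a natural multiple of b
  have hcmult : ∃ u : ℕ, u • b = c := by
    have hcA : c ∈ A := mem_AF_of_mem hcS
    rcases walk c hcA b hbS with ⟨k, hk⟩ | hall
    · -- c + k•b = σ
      refine ⟨σh + (d - k % d), ?_⟩
      rw [add_smul, hσhspec, smul_neg_nat b k]
      rw [← hk]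
      abel
    · -- full coset : M-induction
      have hQex : ∃ m : ℕ, ∃ j : ℕ, j • b = (m + 1) • c := by
        refine ⟨addOrderOf c - 1, 0, ?_⟩
        have hcpos : 0 < addOrderOf c := addOrderOf_pos c
        rw [zero_smul, show addOrderOf c - 1 + 1 = addOrderOf c by omega,
          addOrderOf_nsmul_eq_zero]
      set m0 := Nat.find hQex with hm0
      obtain ⟨j0, hj0⟩ : ∃ j : ℕ, j • b = (m0 + 1) • c := Nat.find_spec hQex
      rcases Nat.eq_zero_or_pos m0 with hm00 | hm0pos
      · -- m0 = 0 : c itself is a multiple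
        refine ⟨j0, ?_⟩
        rw [hj0, hm00]
        simp
      · -- m0 ≥ 1
        have hMind : ∀ m, m ≤ m0 → ∀ k : ℕ, (m + 1) • c + k • b ∈ A → False → True := fun _ _ _ _ _ => trivial
        -- real induction: ∀ m ≤ m0 - 1 ... we do: ∀ m, m + 1 ≤ m0 → ∀ k, (m+1)•c + k•b ∈ A
        have hcoset : ∀ m, m + 1 ≤ m0 → ∀ k : ℕ, (m + 1) • c + k • b ∈ A := by
          intro m
          induction m with
          | zero =>
            intro _ k
            have := hall k
            simpa using this
          | succ m ih =>
            intro hm k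
            have hprev := ih (by omega) k
            have hne : (m + 1) • c + k • b ≠ σ := by
              intro h
              apply Nat.find_min hQex (m := m) (by omega)
              refine ⟨σh + (d - k % d), ?_⟩
              rw [add_smul, hσhspec, smul_neg_nat b k, ← h]
              abel
            have := door c hcS _ hprev hne
            rw [show (m + 1) • c + k • b + c = (m + 1 + 1) • c + k • b by
              rw [succ_nsmul c (m + 1)]; abel] at this
            exact this
        -- now take m = m0 - 1, k = d - j0 % d  to get -c ∈ A
        have hm1 : (m0 - 1) + 1 ≤ m0 := by omega
        have hx := hcoset (m0 - 1) hm1 (d - j0 % d)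
        have hxeq : ((m0 - 1) + 1) • c + (d - j0 % d) • b = -c := by
          rw [smul_neg_nat b j0, hj0, show (m0 - 1) + 1 = m0 by omega]
          rw [succ_nsmul]
          abel
        rw [hxeq] at hx
        have hcσ : -c = σ := neg_mem_imp c hcS hx
        -- then c = (d - σh)•b
        refine ⟨d - σh % d, ?_⟩
        rw [smul_neg_nat b σh, hσhspec, ← hcσ]
        simp
  -- normalize u
  obtain ⟨u0, hu0⟩ := hcmult
  set u := u0 % d with hu
  have huc : u • b = c := by rw [hu, smul_mod]; exact hu0
  have hud : u < d := Nat.mod_lt u0 hdpos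
  have hu1 : 1 ≤ u := by
    rcases Nat.eq_zero_or_pos u with h0 | h1
    · exfalso
      apply term_ne_zero hcS hzf
      rw [← huc, h0, zero_smul]
    · exact h1
  have hu2 : 2 ≤ u := by
    by_contra hcon
    push_neg at hcon
    have h1 : u = 1 := by omega
    apply hbc
    rw [← huc, h1, one_smul]
  have huσ : u ≤ σh := Bexact u hud (huc ▸ mem_AF_of_mem hcS)
  -- final contradiction
  rcases le_or_gt (u + σh) d with hcase | hcase
  · -- x = (σh - 1)•b , x + c = (σh - 1 + u)•b with index in (σh, d)
    have hx : (σh - 1) • b ∈ A := walk_prefix _ (by omega)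
    have hxne : (σh - 1) • b ≠ σ := by
      intro h
      rw [← hσhspec] at h
      have := smul_inj (i := σh - 1) (j := σh) (by omega) (by omega) h
      omega
    have hdoor := door c hcS _ hx hxne
    rw [← huc, ← add_smul] at hdoor
    have hj' := Bexact (σh - 1 + u) (by omega) hdoor
    omega
  · -- x = (d - 1 - u)•b , x + c = (d-1)•b = -b
    have hile : d - 1 - u ≤ σh := by omega
    have hx : (d - 1 - u) • b ∈ A := walk_prefix _ hile
    have hxne : (d - 1 - u) • b ≠ σ := by
      intro h
      rw [← hσhspec] at h
      have := smul_inj (i := d - 1 - u) (j := σh) (by omega) (by omega) h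
      omega
    have hdoor := door c hcS _ hx hxne
    rw [← huc, ← add_smul, show d - 1 - u + u = d - 1 by omega, hdb] at hdoor
    exact hnegb hdoor

end rigid

section main
variable [Fintype G]

theorem main_dichotomy : ∀ S : Multiset G, ZF S → S ≠ 0 →
    2 * S.card ≤ (AF S).card ∨ SmI S := by
  intro S
  induction S using Multiset.strongInductionOn with
  | ih S IH =>
  intro hzf hS0
  classical
  by_cases hsv : ∀ u ∈ S, ∀ v ∈ S, u = v
  · exact Or.inr (single_value_SmI hzf hS0 hsv)
  push_neg at hsv
  obtain ⟨b0, hb0, c0, hc0, hne0⟩ := hsv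
  by_cases hsm : ∃ b ∈ S, SmI (S.erase b)
  · obtain ⟨b, hb, h⟩ := hsm
    exact lift_lemma hzf hb h
  push_neg at hsm
  have herase_ne : ∀ b ∈ S, S.erase b ≠ 0 := by
    intro b hb h0
    rcases eq_or_ne b0 b with rfl | hne
    · have : c0 ∈ S.erase b0 := (Multiset.mem_erase_of_ne (fun h => hne0 h.symm)).2 hc0
      rw [h0] at this
      simp at this
    · have : b0 ∈ S.erase b := (Multiset.mem_erase_of_ne hne).2 hb0
      rw [h0] at this
      simp at this
  have hIH : ∀ b ∈ S, 2 * (S.erase b).card ≤ (AF (S.erase b)).card := by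
    intro b hb
    have hlt : S.erase b < S := Multiset.erase_lt.2 hb
    have hzf' : ZF (S.erase b) := ZF_of_le (Multiset.erase_le b S) hzf
    rcases IH _ hlt hzf' (herase_ne b hb) with h | h
    · exact h
    · exact absurd h (hsm b hb)
  have hScard : ∀ b ∈ S, (S.erase b).card + 1 = S.card := by
    intro b hb
    rw [Multiset.card_erase_of_mem hb]
    have hp : 0 < S.card := Multiset.card_pos.2 hS0
    exact Nat.succ_pred_eq_of_pos hp
  by_cases hgrow : ∃ b ∈ S, (AF (S.erase b)).card + 2 ≤ (AF S).card
  · left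
    obtain ⟨b, hb, h⟩ := hgrow
    have h1 := hIH b hb
    have h2 := hScard b hb
    omega
  push_neg at hgrow
  exfalso
  have Hmem : ∀ v ∈ S, ∀ x ∈ AF S, x ≠ S.sum → x ∈ AF (S.erase v) := by
    intro v hv
    have h1 : (AF S).card ≤ (AF (S.erase v)).card + 1 := by
      have := hgrow v hv
      omega
    have h2 : (AF (S.erase v)).card < (AF S).card := AF_card_lt hv hzf
    have hsub : AF (S.erase v) ⊆ AF S := AF_le (Multiset.erase_le v S)
    have hσ : S.sum ∈ AF S := sum_mem_AF S
    have hσn : S.sum ∉ AF (S.erase v) := sum_not_mem_AF_erase hv hzf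
    have hdiff : (AF S) \ (AF (S.erase v)) = {S.sum} := by
      apply Finset.eq_singleton_iff_unique_mem.2
      refine ⟨Finset.mem_sdiff.2 ⟨hσ, hσn⟩, ?_⟩
      intro x hx
      by_contra hxne
      have hlt2 : 1 < ((AF S) \ (AF (S.erase v))).card :=
        Finset.one_lt_card.2 ⟨x, hx, S.sum, Finset.mem_sdiff.2 ⟨hσ, hσn⟩, hxne⟩
      have hcard : ((AF S) \ (AF (S.erase v))).card = (AF S).card - (AF (S.erase v)).card :=
        Finset.card_sdiff_of_subset hsub
      omega
    intro x hx hxσ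
    by_contra hxn
    have hmem : x ∈ (AF S) \ (AF (S.erase v)) := Finset.mem_sdiff.2 ⟨hx, hxn⟩
    rw [hdiff] at hmem
    exact hxσ (Finset.mem_singleton.1 hmem)
  exact rigid_absurd hzf Hmem hb0 hc0 hne0

end main

lemma count_ones_bound {cf : Multiset ℕ} (h1 : ∀ x ∈ cf, 1 ≤ x) :
    2 * cf.card ≤ cf.sum + cf.count 1 := by
  induction cf using Multiset.induction_on with
  | empty => simp
  | cons a s ih =>
    have ha := h1 a (Multiset.mem_cons_self a s)
    have ihs := ih (fun x hx => h1 x (Multiset.mem_cons_of_mem hx))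
    rcases eq_or_ne a 1 with rfl | hne
    · simp only [Multiset.card_cons, Multiset.sum_cons, Multiset.count_cons_self]
      omega
    · rw [Multiset.count_cons_of_ne (fun h => hne h.symm) ] <;> try skip
      simp only [Multiset.card_cons, Multiset.sum_cons]
      omega

lemma count_map_ge [Fintype G] (g : G) (cf : Multiset ℕ) :
    cf.count 1 ≤ (cf.map (fun j => j • g)).count g := by
  induction cf using Multiset.induction_on with
  | empty => simp
  | cons a s ih =>
    rw [Multiset.map_cons]
    rcases eq_or_ne a 1 with rfl | hne
    · rw [Multiset.count_cons_self, one_smul, Multiset.count_cons_self]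
      omega
    · rw [Multiset.count_cons_of_ne (fun h => hne h.symm)]
      rcases eq_or_ne (a • g) g with he | he
      · rw [he, Multiset.count_cons_self]; omega
      · rw [Multiset.count_cons_of_ne (fun h => he h.symm)]; exact ih

end ZFAux

/-- A list in an additive commutative group is zero-free if no nonempty
sublist sums to zero. -/
def ZeroFree {G : Type*} [AddCommGroup G] (l : List G) : Prop :=
  ∀ t : List G, t.Sublist l → t ≠ [] → t.sum ≠ 0

/-- The sumset of a list: all sums of nonempty sublists. -/
def sumset {G : Type*} [AddCommGroup G] (l : List G) : Set G :=
  {x | ∃ t : List G, t.Sublist l ∧ t ≠ [] ∧ t.sum = x}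

open ZFAux in
theorem stmt16 (n ℓ : ℕ) (heven : Even n) (h1 : n < 2 * ℓ) (h2 : ℓ < n) :
    (∀ α : List (ZMod n), α.length = ℓ → ZeroFree α →
      ∃ a ∈ α, addOrderOf a = n ∧ 2 * ℓ - n + 1 ≤ α.count a) ∧
    (∀ β : List (ZMod n),
      β = List.replicate (2 * ℓ - n + 1) (1 : ZMod n) ++
          List.replicate (n - ℓ - 1) (2 : ZMod n) →
      ZeroFree β ∧ β.length = ℓ ∧
        ∀ a : ZMod n, addOrderOf a = n → β.count a ≤ 2 * ℓ - n + 1) := by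
  have hn2 : 2 ≤ n := by
    rcases heven with ⟨m, rfl⟩
    omega
  haveI : NeZero n := ⟨by omega⟩
  constructor
  · -- part 1
    intro α hlen hzf
    set S : Multiset (ZMod n) := (α : Multiset (ZMod n)) with hS
    have hZF : ZF S := by
      intro t ht htne
      obtain ⟨lt⟩ := t
      have hsp : lt.Subperm α := Multiset.coe_le.1 ht
      obtain ⟨l', hperm, hsub⟩ := hsp
      have hltne : lt ≠ [] := by
        intro h0
        apply htne
        rw [h0]
        rfl
      have hlne : l' ≠ [] := by
        intro h0
        rw [h0] at hperm
        exact hltne (List.perm_nil.1 hperm.symm)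
      have hres := hzf l' hsub hlne
      have hsum : l'.sum = lt.sum := hperm.sum_eq
      show (lt : Multiset (ZMod n)).sum ≠ 0
      rw [Multiset.sum_coe, ← hsum]
      exact hres
    have hcardS : S.card = ℓ := by rw [hS, Multiset.coe_card, hlen]
    have hSne : S ≠ 0 := by
      intro h0
      have := congrArg Multiset.card h0
      rw [hcardS] at this
      simp at this
      omega
    rcases main_dichotomy S hZF hSne with hbig | hsm
    · exfalso
      have hle : (AF S).card ≤ n := by
        simpa [ZMod.card] using Finset.card_le_univ (AF S)
      rw [hcardS] at hbig
      omega
    · obtain ⟨g, cf, hg, hmap, hcf1, hord, hAF⟩ := hsm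
      have hcardcf : cf.card = ℓ := by
        rw [← hcardS, hmap, Multiset.card_map]
      have hTge : ℓ ≤ cf.sum := by
        have := sum_ge_card hcf1
        omega
      have hdn : addOrderOf g ∣ n := by
        have h := addOrderOf_dvd_card (x := g)
        rwa [ZMod.card] at h
      have hordn : addOrderOf g = n := by
        obtain ⟨k, hk⟩ := hdn
        rcases Nat.lt_or_ge k 2 with hk2 | hk2
        · interval_cases k
          · omega
          · omega
        · nlinarith [hord, hTge]
      have hcount : cf.count 1 ≤ S.count g := by
        rw [hmap]
        exact count_map_ge g cf
      have hones : 2 * ℓ ≤ cf.sum + cf.count 1 := by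
        have := count_ones_bound hcf1
        omega
      have hcountα : S.count g = α.count g := by simp [hS]
      refine ⟨g, ?_, hordn, ?_⟩
      · have hpos : 0 < α.count g := by omega
        exact List.count_pos_iff.1 hpos
      · omega
  · -- part 2
    intro β hβ
    set k := 2 * ℓ - n + 1 with hk
    set m := n - ℓ - 1 with hm
    have hkm : k + 2 * m = n - 1 := by omega
    have hkm2 : k + m = ℓ := by omega
    refine ⟨?_, ?_, ?_⟩
    · -- zero-free
      intro t ht htne
      rw [hβ] at ht
      rw [List.sublist_append_iff] at ht
      obtain ⟨t1, t2, rfl, ht1, ht2⟩ := ht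
      obtain ⟨i, hi, rfl⟩ := List.sublist_replicate_iff.1 ht1
      obtain ⟨j, hj, rfl⟩ := List.sublist_replicate_iff.1 ht2
      have hsum : (List.replicate i (1 : ZMod n) ++ List.replicate j (2 : ZMod n)).sum
          = ((i + 2 * j : ℕ) : ZMod n) := by
        rw [List.sum_append, List.sum_replicate, List.sum_replicate]
        push_cast
        ring
      rw [hsum]
      have hpos : 0 < i + 2 * j := by
        by_contra h0
        push_neg at h0
        apply htne
        have hi0 : i = 0 := by omega
        have hj0 : j = 0 := by omega
        rw [hi0, hj0]
        rfl
      have hlt : i + 2 * j < n := by omega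
      intro hzero
      rw [ZMod.natCast_eq_zero_iff] at hzero
      have := Nat.le_of_dvd hpos hzero
      omega
    · rw [hβ]
      simp [List.length_append, List.length_replicate]
      omega
    · intro a ha
      have h12 : (1 : ZMod n) ≠ (2 : ZMod n) := by
        intro h
        have h' : ((1 : ℕ) : ZMod n) = ((2 : ℕ) : ZMod n) := by push_cast; exact h
        rw [ZMod.natCast_eq_natCast_iff] at h'
        have := (Nat.modEq_iff_dvd' (by omega)).1 h'
        have := Nat.le_of_dvd (by omega) this
        omega
      have h2ord : addOrderOf (2 : ZMod n) ≠ n := by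
        intro hc
        obtain ⟨m', hm'⟩ := heven
        have hsm : (m' : ℕ) • (2 : ZMod n) = 0 := by
          have hmn : ((m' * 2 : ℕ) : ZMod n) = 0 := by
            have h2n : m' * 2 = n := by omega
            rw [h2n, ZMod.natCast_self]
          rw [← hmn]
          push_cast
          ring
        have hdvd := addOrderOf_dvd_iff_nsmul_eq_zero.2 hsm
        rw [hc] at hdvd
        have hm'pos : 0 < m' := by omega
        have := Nat.le_of_dvd hm'pos hdvd
        omega
      rw [hβ, List.count_append, List.count_replicate, List.count_replicate]
      simp only [beq_iff_eq]
      rcases eq_or_ne a 1 with rfl | hne1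
      · rw [if_pos rfl, if_neg (by simpa using fun h => h12 h.symm)]
      · rcases eq_or_ne a 2 with rfl | hne2
        · exact absurd ha h2ord
        · rw [if_neg (by simpa using hne1.symm),
            if_neg (by simpa using hne2.symm)]
          omega
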